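/- arXiv:2602.23558 — 4 statements merged into one kernel-verified Lean document; each statement's English description precedes it below -/
import Mathlib

section
/- Let α, β : ℝ → ℝ^{n+1} be differentiable curves with α(t), β(t) ∈ Hⁿ for all t, which are unit-speed in the Minkowski sense: ⟨α'(t), α'(t)⟩ = 1 and ⟨β'(t), β'(t)⟩ = 1 for all t. Define γ(t) = 2𝒫(α(t))/(α₀(t) + β₀(t)) and δ(t) = 2𝒫(β(t))/(α₀(t) + β₀(t)), curves in ℝⁿ. Then ‖γ'(t)‖ = ‖δ'(t)‖ for all t, where ‖·‖ is the Euclidean norm; in particular γ and δ have the same length over any parameter interval. -/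
open scoped BigOperators

noncomputable section

/-- The Minkowski product on `ℝ^{n+1}`: `⟨x,y⟩ = -x₀y₀ + ∑_{i=1}^n xᵢyᵢ`. -/
def mink {n : ℕ} (x y : Fin (n + 1) → ℝ) : ℝ :=
  -(x 0 * y 0) + ∑ i : Fin n, x i.succ * y i.succ

/-- The vector `e = (1, 0, …, 0)` in `ℝ^{n+1}`. -/
def eVec (n : ℕ) : Fin (n + 1) → ℝ := fun i => if i = 0 then 1 else 0

/-- Projection `𝒫 : ℝ^{n+1} → ℝⁿ`, forgetting the 0-th coordinate, landing in
Euclidean space (with the Euclidean norm). -/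
def proj {n : ℕ} (x : Fin (n + 1) → ℝ) : EuclideanSpace ℝ (Fin n) :=
  WithLp.toLp 2 (fun i => x i.succ)

/-- The hyperboloid model `Hⁿ = {x : ⟨x,x⟩ = -1, x₀ > 0}`. -/
def Hyp (n : ℕ) : Set (Fin (n + 1) → ℝ) := {x | mink x x = -1 ∧ 0 < x 0}

/-- First component of the Pogorelov map: `P₁(x,y) = 2𝒫(x)/(-⟨x+y,e⟩)`. -/
def P1 {n : ℕ} (x y : Fin (n + 1) → ℝ) : EuclideanSpace ℝ (Fin n) :=
  (2 / (-(mink (x + y) (eVec n)))) • proj x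

/-- Second component of the Pogorelov map: `P₂(x,y) = 2𝒫(y)/(-⟨x+y,e⟩)`. -/
def P2 {n : ℕ} (x y : Fin (n + 1) → ℝ) : EuclideanSpace ℝ (Fin n) :=
  (2 / (-(mink (x + y) (eVec n)))) • proj y

/-- The function `f(a,b) = (2+‖a‖+‖b‖)(2-‖a‖+‖b‖)(2+‖a‖-‖b‖)(2-‖a‖-‖b‖)`. -/
def fQ {n : ℕ} (a b : EuclideanSpace ℝ (Fin n)) : ℝ :=
  (2 + ‖a‖ + ‖b‖) * (2 - ‖a‖ + ‖b‖) * (2 + ‖a‖ - ‖b‖) * (2 - ‖a‖ - ‖b‖)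

/-- The vector in `ℝ^{n+1}` with 0-th coordinate `t` and `𝒫`-projection `v`. -/
def liftVec {n : ℕ} (t : ℝ) (v : EuclideanSpace ℝ (Fin n)) : Fin (n + 1) → ℝ :=
  Fin.cons t (fun i => v i)

/-- First component of `Ψ(a,b)`, namely `(√(‖x̂‖²+1), x̂)` with `x̂ = 4a/√f(a,b)`. -/
def Psi1 {n : ℕ} (a b : EuclideanSpace ℝ (Fin n)) : Fin (n + 1) → ℝ :=
  liftVec (Real.sqrt (‖(4 / Real.sqrt (fQ a b)) • a‖ ^ 2 + 1)) ((4 / Real.sqrt (fQ a b)) • a)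

/-- Second component of `Ψ(a,b)`, namely `(√(‖ŷ‖²+1), ŷ)` with `ŷ = 4b/√f(a,b)`. -/
def Psi2 {n : ℕ} (a b : EuclideanSpace ℝ (Fin n)) : Fin (n + 1) → ℝ :=
  liftVec (Real.sqrt (‖(4 / Real.sqrt (fQ a b)) • b‖ ^ 2 + 1)) ((4 / Real.sqrt (fQ a b)) • b)

/-- `proj` as a continuous linear map. -/
def projL (n : ℕ) : (Fin (n + 1) → ℝ) →L[ℝ] EuclideanSpace ℝ (Fin n) :=
  (EuclideanSpace.equiv (Fin n) ℝ).symm.toContinuousLinearMap.comp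
    (ContinuousLinearMap.pi fun i : Fin n =>
      ContinuousLinearMap.proj (R := ℝ) (φ := fun _ : Fin (n + 1) => ℝ) i.succ)

lemma projL_eq {n : ℕ} (x : Fin (n + 1) → ℝ) : projL n x = proj x := rfl

lemma sum_expand {n : ℕ} (r w : ℝ) (a a' : Fin (n + 1) → ℝ) :
    ∑ i : Fin n, (r * a i.succ + w * a' i.succ) ^ 2
      = r * r * (∑ i : Fin n, a i.succ * a i.succ)
        + 2 * r * w * (∑ i : Fin n, a i.succ * a' i.succ)
        + w * w * (∑ i : Fin n, a' i.succ * a' i.succ) := by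
  simp only [Finset.mul_sum]
  rw [← Finset.sum_add_distrib, ← Finset.sum_add_distrib]
  exact Finset.sum_congr rfl fun i _ => by ring

/-- for a pair of differentiable unit-speed (in the Minkowski sense)
curves on the hyperboloid, the two image curves of the Pogorelov map have equal
Euclidean speeds. -/
theorem statement_4 {n : ℕ} (hn : 1 ≤ n) (α β : ℝ → Fin (n + 1) → ℝ)
    (hαd : Differentiable ℝ α) (hβd : Differentiable ℝ β)
    (hαH : ∀ t, α t ∈ Hyp n) (hβH : ∀ t, β t ∈ Hyp n)
    (hαu : ∀ t, mink (deriv α t) (deriv α t) = 1)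
    (hβu : ∀ t, mink (deriv β t) (deriv β t) = 1)
    (γ δ : ℝ → EuclideanSpace ℝ (Fin n))
    (hγ : ∀ t, γ t = (2 / (α t 0 + β t 0)) • proj (α t))
    (hδ : ∀ t, δ t = (2 / (α t 0 + β t 0)) • proj (β t)) :
    ∀ t, ‖deriv γ t‖ = ‖deriv δ t‖ := by
  intro t
  have hαt : HasDerivAt α (deriv α t) t := (hαd t).hasDerivAt
  have hβt : HasDerivAt β (deriv β t) t := (hβd t).hasDerivAt
  have hcα : ∀ i : Fin (n + 1), HasDerivAt (fun s => α s i) (deriv α t i) t := fun i =>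
    (ContinuousLinearMap.proj i : (Fin (n + 1) → ℝ) →L[ℝ] ℝ).hasFDerivAt.comp_hasDerivAt t hαt
  have hcβ : ∀ i : Fin (n + 1), HasDerivAt (fun s => β s i) (deriv β t i) t := fun i =>
    (ContinuousLinearMap.proj i : (Fin (n + 1) → ℝ) →L[ℝ] ℝ).hasFDerivAt.comp_hasDerivAt t hβt
  -- notation
  set u := α t 0 with hu
  set v := β t 0 with hv
  set p := deriv α t 0 with hp
  set q := deriv β t 0 with hq
  have hupos : 0 < u := (hαH t).2
  have hvpos : 0 < v := (hβH t).2
  have hsne : u + v ≠ 0 := by positivity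
  -- derivative of the denominator
  have hs : HasDerivAt (fun s => α s 0 + β s 0) (p + q) t := (hcα 0).add (hcβ 0)
  have hsne' : (fun s => α s 0 + β s 0) t ≠ 0 := hsne
  have hc : HasDerivAt (fun s => 2 / (α s 0 + β s 0))
      ((0 * (u + v) - 2 * (p + q)) / (u + v) ^ 2) t :=
    (hasDerivAt_const t (2 : ℝ)).div hs hsne'
  set r : ℝ := (0 * (u + v) - 2 * (p + q)) / (u + v) ^ 2 with hr
  set w : ℝ := 2 / (u + v) with hw
  -- derivative of the projected curves
  have hPA : HasDerivAt (fun s => projL n (α s)) (projL n (deriv α t)) t :=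
    (projL n).hasFDerivAt.comp_hasDerivAt t hαt
  have hPB : HasDerivAt (fun s => projL n (β s)) (projL n (deriv β t)) t :=
    (projL n).hasFDerivAt.comp_hasDerivAt t hβt
  have hγfun : γ = fun s => (2 / (α s 0 + β s 0)) • projL n (α s) := by
    funext s; rw [hγ s, projL_eq]
  have hδfun : δ = fun s => (2 / (α s 0 + β s 0)) • projL n (β s) := by
    funext s; rw [hδ s, projL_eq]
  have hγ' : HasDerivAt (fun s => (2 / (α s 0 + β s 0)) • projL n (α s))
      (w • projL n (deriv α t) + r • projL n (α t)) t := hc.smul hPA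
  have hδ' : HasDerivAt (fun s => (2 / (α s 0 + β s 0)) • projL n (β s))
      (w • projL n (deriv β t) + r • projL n (β t)) t := hc.smul hPB
  have hdγ : deriv γ t = w • projL n (deriv α t) + r • projL n (α t) := by
    rw [hγfun]; exact hγ'.deriv
  have hdδ : deriv δ t = w • projL n (deriv β t) + r • projL n (β t) := by
    rw [hδfun]; exact hδ'.deriv
  -- scalar facts from the hyperboloid constraint
  have hIA : ∑ i : Fin n, α t i.succ * α t i.succ = u * u - 1 := by
    have h := (hαH t).1; unfold mink at h; linarith
  have hIB : ∑ i : Fin n, β t i.succ * β t i.succ = v * v - 1 := by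
    have h := (hβH t).1; unfold mink at h; linarith
  have hIA' : ∑ i : Fin n, deriv α t i.succ * deriv α t i.succ = p * p + 1 := by
    have h := hαu t; unfold mink at h; linarith
  have hIB' : ∑ i : Fin n, deriv β t i.succ * deriv β t i.succ = q * q + 1 := by
    have h := hβu t; unfold mink at h; linarith
  -- cross terms from differentiating the constraint
  have hcross : ∀ (f : ℝ → Fin (n + 1) → ℝ)
      (hc : ∀ i : Fin (n + 1), HasDerivAt (fun s => f s i) (deriv f t i) t)
      (hH : ∀ s, mink (f s) (f s) = -1),
      ∑ i : Fin n, f t i.succ * deriv f t i.succ = f t 0 * deriv f t 0 := by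
    intro f hcf hH
    have hg : HasDerivAt (fun s => -(f s 0 * f s 0) + ∑ i : Fin n, f s i.succ * f s i.succ)
        (-(deriv f t 0 * f t 0 + f t 0 * deriv f t 0)
          + ∑ i : Fin n, (deriv f t i.succ * f t i.succ + f t i.succ * deriv f t i.succ)) t :=
      (((hcf 0).mul (hcf 0)).neg).add (HasDerivAt.fun_sum fun i _ => (hcf i.succ).mul (hcf i.succ))
    have hfun : (fun s => -(f s 0 * f s 0) + ∑ i : Fin n, f s i.succ * f s i.succ)
        = fun _ => (-1 : ℝ) := by
      funext s; exact hH s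
    have hzero := hg.unique (hfun ▸ hasDerivAt_const t (-1 : ℝ))
    have hsum : ∑ i : Fin n, (deriv f t i.succ * f t i.succ + f t i.succ * deriv f t i.succ)
        = 2 * ∑ i : Fin n, f t i.succ * deriv f t i.succ := by
      rw [Finset.mul_sum]; exact Finset.sum_congr rfl fun i _ => by ring
    rw [hsum] at hzero
    linarith
  have hCA : ∑ i : Fin n, α t i.succ * deriv α t i.succ = u * p :=
    hcross α hcα fun s => (hαH s).1
  have hCB : ∑ i : Fin n, β t i.succ * deriv β t i.succ = v * q :=
    hcross β hcβ fun s => (hβH s).1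
  -- compute the norms
  rw [EuclideanSpace.norm_eq, EuclideanSpace.norm_eq]
  congr 1
  have happγ : ∀ i : Fin n, deriv γ t i = r * α t i.succ + w * deriv α t i.succ := by
    intro i
    rw [hdγ]
    simp [projL_eq, proj, PiLp.add_apply, PiLp.smul_apply, smul_eq_mul]
    ring
  have happδ : ∀ i : Fin n, deriv δ t i = r * β t i.succ + w * deriv β t i.succ := by
    intro i
    rw [hdδ]
    simp [projL_eq, proj, PiLp.add_apply, PiLp.smul_apply, smul_eq_mul]
    ring
  calc ∑ i : Fin n, ‖deriv γ t i‖ ^ 2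
      = ∑ i : Fin n, (r * α t i.succ + w * deriv α t i.succ) ^ 2 := by
        refine Finset.sum_congr rfl fun i _ => ?_
        rw [happγ i, Real.norm_eq_abs, sq_abs]
    _ = r * r * (u * u - 1) + 2 * r * w * (u * p) + w * w * (p * p + 1) := by
        rw [sum_expand, hIA, hCA, hIA']
    _ = r * r * (v * v - 1) + 2 * r * w * (v * q) + w * w * (q * q + 1) := by
        rw [hr, hw]; field_simp; ring
    _ = ∑ i : Fin n, (r * β t i.succ + w * deriv β t i.succ) ^ 2 := by
        rw [sum_expand, hIB, hCB, hIB']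
    _ = ∑ i : Fin n, ‖deriv δ t i‖ ^ 2 := by
        refine Finset.sum_congr rfl fun i _ => ?_
        rw [happδ i, Real.norm_eq_abs, sq_abs]
end
end

section
/- For all x, y ∈ Hⁿ, the pair (P₁(x,y), P₂(x,y)) lies in Ω and Ψ(P₁(x,y), P₂(x,y)) = (x, y); that is, Ψ ∘ Φ is the identity on Hⁿ × Hⁿ. -/
open scoped BigOperators

noncomputable section

lemma norm_proj_sq {n : ℕ} (x : Fin (n+1) → ℝ) :
    ‖proj x‖ ^ 2 = ∑ i : Fin n, x i.succ * x i.succ := by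
  rw [EuclideanSpace.norm_eq, Real.sq_sqrt (by positivity)]
  refine Finset.sum_congr rfl fun i _ => ?_
  rw [Real.norm_eq_abs, sq_abs, sq]
  rfl

lemma mink_e {n : ℕ} (x y : Fin (n+1) → ℝ) :
    -(mink (x + y) (eVec n)) = x 0 + y 0 := by
  simp [mink, eVec, Fin.succ_ne_zero]

/-- `Φ(Hⁿ × Hⁿ) ⊆ Ω` and `Ψ ∘ Φ = id` on `Hⁿ × Hⁿ`. -/
theorem statement_6 {n : ℕ} (hn : 1 ≤ n) (x y : Fin (n + 1) → ℝ)
    (hx : x ∈ Hyp n) (hy : y ∈ Hyp n) :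
    ‖P1 x y‖ + ‖P2 x y‖ < 2 ∧
    Psi1 (P1 x y) (P2 x y) = x ∧ Psi2 (P1 x y) (P2 x y) = y := by
  obtain ⟨hx1, hx0⟩ := hx
  obtain ⟨hy1, hy0⟩ := hy
  set α := ‖proj x‖ with hαdef
  set β := ‖proj y‖ with hβdef
  have hα : 0 ≤ α := norm_nonneg _
  have hβ : 0 ≤ β := norm_nonneg _
  have hxsq : x 0 ^ 2 = 1 + α ^ 2 := by
    have h := norm_proj_sq x
    rw [mink] at hx1
    nlinarith [h]
  have hysq : y 0 ^ 2 = 1 + β ^ 2 := by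
    have h := norm_proj_sq y
    rw [mink] at hy1
    nlinarith [h]
  have hxα : α < x 0 := by nlinarith
  have hyβ : β < y 0 := by nlinarith
  set s := x 0 + y 0 with hsdef
  have hs : 0 < s := by positivity
  have hs' : s ≠ 0 := ne_of_gt hs
  have hmink : -(mink (x + y) (eVec n)) = s := mink_e x y
  have hP1 : P1 x y = (2 / s) • proj x := by rw [P1, hmink]
  have hP2 : P2 x y = (2 / s) • proj y := by rw [P2, hmink]
  have hna : ‖P1 x y‖ = 2 / s * α := by
    rw [hP1, norm_smul, Real.norm_eq_abs, abs_of_pos (by positivity)]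
  have hnb : ‖P2 x y‖ = 2 / s * β := by
    rw [hP2, norm_smul, Real.norm_eq_abs, abs_of_pos (by positivity)]
  have hsum : α + β < s := by linarith
  have h1 : s ^ 2 + β ^ 2 - α ^ 2 = 2 * y 0 * s := by
    rw [hsdef]; linear_combination hxsq - hysq
  have key : ((s + β) ^ 2 - α ^ 2) * ((s - β) ^ 2 - α ^ 2) = 4 * s ^ 2 := by
    linear_combination (s ^ 2 + β ^ 2 - α ^ 2 + 2 * y 0 * s) * h1 + 4 * s ^ 2 * hysq
  have hfq : fQ (P1 x y) (P2 x y) = (8 / s) ^ 2 := by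
    have e1 : fQ (P1 x y) (P2 x y)
        = 16 / s ^ 4 * (((s + β) ^ 2 - α ^ 2) * ((s - β) ^ 2 - α ^ 2)) := by
      rw [fQ, hna, hnb]; field_simp; ring
    rw [e1, key]; field_simp; ring
  have hsf : Real.sqrt (fQ (P1 x y) (P2 x y)) = 8 / s := by
    rw [hfq]; exact Real.sqrt_sq (by positivity)
  have hc : 4 / Real.sqrt (fQ (P1 x y) (P2 x y)) = s / 2 := by
    rw [hsf]; field_simp; ring
  have hone : s / 2 * (2 / s) = 1 := by field_simp
  refine ⟨?_, ?_, ?_⟩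
  · rw [hna, hnb]
    have key2 : 2 / s * α + 2 / s * β = 2 * ((α + β) / s) := by ring
    rw [key2]
    have : (α + β) / s < 1 := (div_lt_one hs).mpr hsum
    linarith
  · have hvx : (4 / Real.sqrt (fQ (P1 x y) (P2 x y))) • (P1 x y) = proj x := by
      rw [hc, hP1, smul_smul, hone, one_smul]
    rw [Psi1, hvx]
    have ht : ‖proj x‖ ^ 2 + 1 = x 0 ^ 2 := by rw [← hαdef, hxsq]; ring
    rw [ht, Real.sqrt_sq hx0.le]
    funext i
    refine Fin.cases ?_ (fun j => ?_) i
    · simp [liftVec]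
    · simp [liftVec, proj]
  · have hvy : (4 / Real.sqrt (fQ (P1 x y) (P2 x y))) • (P2 x y) = proj y := by
      rw [hc, hP2, smul_smul, hone, one_smul]
    rw [Psi2, hvy]
    have ht : ‖proj y‖ ^ 2 + 1 = y 0 ^ 2 := by rw [← hβdef, hysq]; ring
    rw [ht, Real.sqrt_sq hy0.le]
    funext i
    refine Fin.cases ?_ (fun j => ?_) i
    · simp [liftVec]
    · simp [liftVec, proj]
end
end

section
/- Let T : ℝⁿ → ℝⁿ be a linear isometry (orthogonal transformation) and α ∈ ℝⁿ with ‖α‖ < 2. Then there exists a unique linear equivalence A of ℝ^{n+1} preserving the Minkowski product and mapping Hⁿ into Hⁿ such that: for every y ∈ ℝⁿ with ‖y‖ + ‖T y + α‖ < 2, writing Ψ(y, T y + α) = (x, x'), one has x' = A x. Moreover, this same A satisfies: for every y ∈ ℝⁿ with ‖y‖ + ‖T⁻¹(y − α)‖ < 2, writing Ψ(y, T⁻¹(y − α)) = (x, x''), one has x'' = A⁻¹ x. -/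
open scoped BigOperators

noncomputable section

open scoped RealInnerProductSpace

section Aux
variable {n : ℕ}

lemma liftVec_zero (t : ℝ) (v : EuclideanSpace ℝ (Fin n)) : liftVec t v 0 = t := rfl
lemma liftVec_succ (t : ℝ) (v : EuclideanSpace ℝ (Fin n)) (i : Fin n) :
    liftVec t v i.succ = v i := by simp [liftVec]
lemma proj_liftVec (t : ℝ) (v : EuclideanSpace ℝ (Fin n)) : proj (liftVec t v) = v :=
  by ext i; simp [proj, liftVec]
lemma liftVec_eta (x : Fin (n+1) → ℝ) : liftVec (x 0) (proj x) = x := by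
  funext i
  refine Fin.cases ?_ ?_ i
  · rfl
  · intro j; simp [liftVec, proj]
lemma proj_add (x y : Fin (n+1) → ℝ) : proj (x + y) = proj x + proj y := rfl
lemma proj_smul (r : ℝ) (x : Fin (n+1) → ℝ) : proj (r • x) = r • proj x := rfl
lemma mink_inner (x y : Fin (n+1) → ℝ) :
    mink x y = -(x 0 * y 0) + ⟪proj x, proj y⟫ := by
  simp [mink, proj, PiLp.inner_apply, RCLike.inner_apply, mul_comm]

/-- The hyperbolic isometry attached to the rigid motion `y ↦ T y + α`. -/
def Amap (T : EuclideanSpace ℝ (Fin n) ≃ₗᵢ[ℝ] EuclideanSpace ℝ (Fin n))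
    (α : EuclideanSpace ℝ (Fin n)) (x : Fin (n + 1) → ℝ) : Fin (n + 1) → ℝ :=
  liftVec ((x 0 * (1 + ‖α‖ ^ 2 / 4) + ⟪T (proj x), α⟫) / (1 - ‖α‖ ^ 2 / 4))
    (T (proj x) + (((x 0 + ⟪T (proj x), α⟫ / 2) / (1 - ‖α‖ ^ 2 / 4)) • α))

variable (T : EuclideanSpace ℝ (Fin n) ≃ₗᵢ[ℝ] EuclideanSpace ℝ (Fin n))
  (α : EuclideanSpace ℝ (Fin n))

lemma c_pos (hα : ‖α‖ < 2) : 0 < 1 - ‖α‖ ^ 2 / 4 := by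
  have h0 : 0 ≤ ‖α‖ := norm_nonneg α
  nlinarith

lemma amap_add (x y : Fin (n+1) → ℝ) : Amap T α (x + y) = Amap T α x + Amap T α y := by
  funext i
  refine Fin.cases ?_ ?_ i
  · simp only [Amap, proj_add, map_add, inner_add_left, Pi.add_apply, liftVec_zero]
    ring
  · intro j
    simp only [Amap, proj_add, map_add, inner_add_left, Pi.add_apply, liftVec_succ,
      PiLp.add_apply, PiLp.smul_apply, smul_eq_mul]
    ring

lemma amap_smul (r : ℝ) (x : Fin (n+1) → ℝ) : Amap T α (r • x) = r • Amap T α x := by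
  funext i
  refine Fin.cases ?_ ?_ i
  · simp only [Amap, proj_smul, map_smul, inner_smul_left, RCLike.star_def, conj_trivial,
      Pi.smul_apply, liftVec_zero, smul_eq_mul]
    ring
  · intro j
    simp only [Amap, proj_smul, map_smul, inner_smul_left, RCLike.star_def, conj_trivial,
      Pi.smul_apply, liftVec_succ, PiLp.add_apply, PiLp.smul_apply, smul_eq_mul]
    ring

lemma inner_symm_eq (u : EuclideanSpace ℝ (Fin n)) : ⟪u, T.symm α⟫ = ⟪T u, α⟫ := by
  rw [← T.inner_map_map u (T.symm α), T.apply_symm_apply]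

lemma inner_symm_self : ⟪(T.symm α : EuclideanSpace ℝ (Fin n)), T.symm α⟫ = ‖α‖ ^ 2 := by
  rw [real_inner_self_eq_norm_sq, T.symm.norm_map]

lemma amap_comp (hα : ‖α‖ < 2) (x : Fin (n+1) → ℝ) :
    Amap T.symm (-T.symm α) (Amap T α x) = x := by
  have hc : (1 - ‖α‖ ^ 2 / 4) ≠ 0 := ne_of_gt (c_pos α hα)
  have hm : ‖α‖ ^ 2 < 4 := by nlinarith [norm_nonneg α]
  have h1 : (4:ℝ) - ‖α‖ ^ 2 ≠ 0 := by nlinarith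
  have h2 : (8:ℝ) - ‖α‖ ^ 2 * 2 ≠ 0 := by nlinarith
  have h3 : (16:ℝ) - ‖α‖ ^ 2 * 4 ≠ 0 := by nlinarith
  funext i
  refine Fin.cases ?_ ?_ i
  · simp only [Amap, liftVec_zero, proj_liftVec, map_add, map_smul,
      LinearIsometryEquiv.symm_apply_apply, inner_neg_right, inner_add_left,
      real_inner_smul_left, norm_neg, LinearIsometryEquiv.norm_map]
    rw [inner_symm_eq, inner_symm_self]
    field_simp [hc, h1, h2, h3]
    ring
  · intro j
    simp only [Amap, liftVec_succ, liftVec_zero, proj_liftVec, map_add, map_smul,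
      LinearIsometryEquiv.symm_apply_apply, inner_neg_right, inner_add_left,
      real_inner_smul_left, norm_neg, LinearIsometryEquiv.norm_map,
      PiLp.add_apply, PiLp.smul_apply, PiLp.neg_apply, smul_eq_mul]
    rw [inner_symm_eq, inner_symm_self]
    have hpj : proj x j = x j.succ := rfl
    field_simp [hc, h1, h2, h3]
    rw [hpj]
    ring

lemma amap_mink (hα : ‖α‖ < 2) (x y : Fin (n+1) → ℝ) :
    mink (Amap T α x) (Amap T α y) = mink x y := by
  have hc : (1 - ‖α‖ ^ 2 / 4) ≠ 0 := ne_of_gt (c_pos α hα)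
  have hm : ‖α‖ ^ 2 < 4 := by nlinarith [norm_nonneg α]
  have hq : (0:ℝ) < 4 - ‖α‖ ^ 2 := by nlinarith
  have h1 : (4:ℝ) - ‖α‖ ^ 2 ≠ 0 := ne_of_gt hq
  have h2 : (8:ℝ) - ‖α‖ ^ 2 * 2 ≠ 0 := by nlinarith
  have h3 : (16:ℝ) - ‖α‖ ^ 2 * 4 ≠ 0 := by nlinarith
  have h4 : (16:ℝ) - ‖α‖ ^ 2 * 8 + ‖α‖ ^ 4 ≠ 0 := ne_of_gt (by nlinarith [mul_pos hq hq])
  have h5 : (64:ℝ) - ‖α‖ ^ 2 * 32 + ‖α‖ ^ 4 * 4 ≠ 0 := ne_of_gt (by nlinarith [mul_pos hq hq])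
  rw [mink_inner, mink_inner]
  simp only [Amap, liftVec_zero, proj_liftVec, inner_add_left, inner_add_right,
    real_inner_smul_left, real_inner_smul_right, LinearIsometryEquiv.inner_map_map,
    real_inner_self_eq_norm_sq]
  rw [real_inner_comm α (T (proj y))]
  field_simp [hc, h1, h2, h3, h4, h5]
  ring

lemma amap_zero_pos (hα : ‖α‖ < 2) (x : Fin (n+1) → ℝ) (hx : mink x x = -1) (hx0 : 0 < x 0) :
    0 < Amap T α x 0 := by
  have hcpos : 0 < 1 - ‖α‖ ^ 2 / 4 := c_pos α hα
  have hu : ⟪proj x, proj x⟫ = x 0 ^ 2 - 1 := by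
    rw [mink_inner] at hx; nlinarith [hx]
  have hnu : ‖proj x‖ ^ 2 = x 0 ^ 2 - 1 := by
    rw [← real_inner_self_eq_norm_sq, hu]
  have hux : ‖proj x‖ < x 0 := by
    nlinarith [norm_nonneg (proj x)]
  have hsb : |⟪T (proj x), α⟫| ≤ ‖proj x‖ * ‖α‖ := by
    have := abs_real_inner_le_norm (T (proj x)) α
    rwa [T.norm_map] at this
  have hs : -(‖proj x‖ * ‖α‖) ≤ ⟪T (proj x), α⟫ := neg_le_of_abs_le hsb
  simp only [Amap, liftVec_zero]
  apply div_pos _ hcpos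
  nlinarith [mul_pos hx0 (show (0:ℝ) < (2 - ‖α‖)^2 by nlinarith [norm_nonneg α]),
    mul_le_mul_of_nonneg_right hux.le (norm_nonneg α), norm_nonneg α, norm_nonneg (proj x)]

lemma fQ_pos {a b : EuclideanSpace ℝ (Fin n)} (hab : ‖a‖ + ‖b‖ < 2) : 0 < fQ a b := by
  have ha := norm_nonneg a; have hb := norm_nonneg b
  have f1 : (0:ℝ) < 2 + ‖a‖ + ‖b‖ := by linarith
  have f2 : (0:ℝ) < 2 - ‖a‖ + ‖b‖ := by linarith
  have f3 : (0:ℝ) < 2 + ‖a‖ - ‖b‖ := by linarith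
  have f4 : (0:ℝ) < 2 - ‖a‖ - ‖b‖ := by linarith
  exact mul_pos (mul_pos (mul_pos f1 f2) f3) f4

lemma sqrt_term (a b : EuclideanSpace ℝ (Fin n)) (hab : ‖a‖ + ‖b‖ < 2) :
    Real.sqrt (‖(4 / Real.sqrt (fQ a b)) • a‖ ^ 2 + 1)
      = (4 + ‖a‖ ^ 2 - ‖b‖ ^ 2) / Real.sqrt (fQ a b) := by
  have hf : 0 < fQ a b := fQ_pos hab
  have hr : 0 < Real.sqrt (fQ a b) := Real.sqrt_pos.mpr hf
  have hr2 : Real.sqrt (fQ a b) ^ 2 = fQ a b := Real.sq_sqrt hf.le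
  have hb2 : ‖b‖ < 2 := by nlinarith [norm_nonneg a]
  have hnum : (0:ℝ) ≤ 4 + ‖a‖ ^ 2 - ‖b‖ ^ 2 := by nlinarith [norm_nonneg b]
  have h1 : ‖(4 / Real.sqrt (fQ a b)) • a‖ ^ 2 + 1
      = ((4 + ‖a‖ ^ 2 - ‖b‖ ^ 2) / Real.sqrt (fQ a b)) ^ 2 := by
    rw [norm_smul, Real.norm_eq_abs, abs_of_pos (by positivity : (0:ℝ) < 4 / Real.sqrt (fQ a b))]
    rw [mul_pow, div_pow, div_pow, hr2]
    field_simp [ne_of_gt hf]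
    simp only [fQ]; ring
  rw [h1, Real.sqrt_sq (by positivity)]

lemma psi_step (hα : ‖α‖ < 2) (a : EuclideanSpace ℝ (Fin n))
    (hab : ‖a‖ + ‖T a + α‖ < 2) :
    Psi2 a (T a + α) = Amap T α (Psi1 a (T a + α)) := by
  have hcpos : (0:ℝ) < 1 - ‖α‖ ^ 2 / 4 := by nlinarith [norm_nonneg α]
  have hc : (1 - ‖α‖ ^ 2 / 4) ≠ 0 := ne_of_gt hcpos
  have hm : ‖α‖ ^ 2 < 4 := by nlinarith [norm_nonneg α]
  have h4 : (4:ℝ) - ‖α‖ ^ 2 ≠ 0 := by nlinarith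
  have h8 : (8:ℝ) - ‖α‖ ^ 2 * 2 ≠ 0 := by nlinarith
  have h16 : (16:ℝ) - ‖α‖ ^ 2 * 4 ≠ 0 := by nlinarith
  have h32 : (32:ℝ) - ‖α‖ ^ 2 * 8 ≠ 0 := by nlinarith
  have hf : 0 < fQ a (T a + α) := fQ_pos hab
  have hr : 0 < Real.sqrt (fQ a (T a + α)) := Real.sqrt_pos.mpr hf
  have hab' : ‖T a + α‖ + ‖a‖ < 2 := by linarith
  have hfQsymm : fQ (T a + α) a = fQ a (T a + α) := by simp only [fQ]; ring
  have hbnorm : ‖T a + α‖ ^ 2 = ‖a‖ ^ 2 + 2 * ⟪T a, α⟫ + ‖α‖ ^ 2 := by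
    rw [norm_add_sq_real, T.norm_map]
  have hTa : ⟪T a, α⟫ = (‖T a + α‖ ^ 2 - ‖a‖ ^ 2 - ‖α‖ ^ 2) / 2 := by linarith
  simp only [Psi1, Psi2]
  rw [sqrt_term a (T a + α) hab]
  have h2 : Real.sqrt (‖(4 / Real.sqrt (fQ a (T a + α))) • (T a + α)‖ ^ 2 + 1)
      = (4 + ‖T a + α‖ ^ 2 - ‖a‖ ^ 2) / Real.sqrt (fQ a (T a + α)) := by
    have := sqrt_term (T a + α) a hab'
    rw [hfQsymm] at this
    exact this
  rw [h2]
  simp only [Amap, proj_liftVec, liftVec_zero, map_smul, real_inner_smul_left]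
  funext i
  refine Fin.cases ?_ ?_ i
  · rw [liftVec_zero, liftVec_zero, hTa]
    field_simp [hc, hr.ne', h4, h8, h16, h32]
    ring
  · intro j
    rw [liftVec_succ, liftVec_succ, hTa]
    simp only [PiLp.add_apply, PiLp.smul_apply, smul_eq_mul]
    field_simp [hc, hr.ne', h4, h8, h16, h32]
    ring

lemma psi1_zero (b : EuclideanSpace ℝ (Fin n)) : Psi1 0 b = liftVec 1 0 := by
  simp [Psi1]

lemma liftVec_one_zero :
    liftVec (1:ℝ) (0 : EuclideanSpace ℝ (Fin n)) = Pi.single (0 : Fin (n+1)) (1:ℝ) := by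
  funext k
  refine Fin.cases ?_ ?_ k
  · simp [liftVec]
  · intro j
    simp [liftVec_succ, Pi.single_apply, (Fin.succ_ne_zero j)]

lemma liftVec_single (t c ε : ℝ) (i : Fin n) :
    liftVec t (c • EuclideanSpace.single i ε)
      = t • (Pi.single 0 1 : Fin (n+1) → ℝ) + (c * ε) • (Pi.single i.succ 1 : Fin (n+1) → ℝ) := by
  funext k
  refine Fin.cases ?_ ?_ k
  · simp [liftVec, Pi.single_apply, (Fin.succ_ne_zero i).symm]
  · intro j
    simp only [liftVec_succ, PiLp.smul_apply, EuclideanSpace.single_apply, smul_eq_mul,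
      Pi.add_apply, Pi.smul_apply, Pi.single_apply, Fin.succ_inj,
      (Fin.succ_ne_zero j), if_false, mul_zero, zero_add]
    by_cases h : j = i <;> simp [h]

/-- The hyperbolic isometry as a linear equivalence. -/
def Aequiv (hα : ‖α‖ < 2) : (Fin (n + 1) → ℝ) ≃ₗ[ℝ] (Fin (n + 1) → ℝ) where
  toFun := Amap T α
  map_add' := amap_add T α
  map_smul' := amap_smul T α
  invFun := Amap T.symm (-T.symm α)
  left_inv := amap_comp T α hα
  right_inv := fun x => by
    have hα2 : ‖(-T.symm α : EuclideanSpace ℝ (Fin n))‖ < 2 := by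
      rw [norm_neg, LinearIsometryEquiv.norm_map]; exact hα
    have h := amap_comp T.symm (-T.symm α) hα2 x
    rw [LinearIsometryEquiv.symm_symm, map_neg, neg_neg,
      LinearIsometryEquiv.apply_symm_apply] at h
    exact h

lemma Aequiv_apply (hα : ‖α‖ < 2) (x : Fin (n+1) → ℝ) :
    Aequiv T α hα x = Amap T α x := rfl
lemma Aequiv_symm_apply (hα : ‖α‖ < 2) (x : Fin (n+1) → ℝ) :
    (Aequiv T α hα).symm x = Amap T.symm (-T.symm α) x := rfl

end Aux

/-- every rigid motion `y ↦ Ty + α` of Euclidean `ℝⁿ` with `‖α‖ < 2`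
determines a unique hyperbolic isometry `A` such that `Ψ(y, Ty + α) = (x, Ax)`
whenever `(y, Ty+α) ∈ Ω`; moreover the same `A` satisfies
`Ψ(y, T⁻¹(y − α)) = (x, A⁻¹x)` whenever `(y, T⁻¹(y − α)) ∈ Ω`. -/
theorem statement_9 {n : ℕ} (hn : 1 ≤ n)
    (T : EuclideanSpace ℝ (Fin n) ≃ₗᵢ[ℝ] EuclideanSpace ℝ (Fin n))
    (α : EuclideanSpace ℝ (Fin n)) (hα : ‖α‖ < 2) :
    ∃ A : (Fin (n + 1) → ℝ) ≃ₗ[ℝ] (Fin (n + 1) → ℝ),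
      (∀ x y, mink (A x) (A y) = mink x y) ∧
      (∀ x ∈ Hyp n, A x ∈ Hyp n) ∧
      (∀ y : EuclideanSpace ℝ (Fin n), ‖y‖ + ‖T y + α‖ < 2 →
        Psi2 y (T y + α) = A (Psi1 y (T y + α))) ∧
      (∀ y : EuclideanSpace ℝ (Fin n), ‖y‖ + ‖T.symm (y - α)‖ < 2 →
        Psi2 y (T.symm (y - α)) = A.symm (Psi1 y (T.symm (y - α)))) ∧
      ∀ A' : (Fin (n + 1) → ℝ) ≃ₗ[ℝ] (Fin (n + 1) → ℝ),
        (∀ x y, mink (A' x) (A' y) = mink x y) →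
        (∀ x ∈ Hyp n, A' x ∈ Hyp n) →
        (∀ y : EuclideanSpace ℝ (Fin n), ‖y‖ + ‖T y + α‖ < 2 →
          Psi2 y (T y + α) = A' (Psi1 y (T y + α))) →
        A' = A := by
  have hα2 : ‖(-T.symm α : EuclideanSpace ℝ (Fin n))‖ < 2 := by
    rw [norm_neg, LinearIsometryEquiv.norm_map]; exact hα
  refine ⟨Aequiv T α hα, fun x y => amap_mink T α hα x y, ?_, ?_, ?_, ?_⟩
  · rintro x ⟨hx1, hx2⟩
    refine ⟨?_, amap_zero_pos T α hα x hx1 hx2⟩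
    rw [Aequiv_apply, amap_mink T α hα]
    exact hx1
  · intro y hy
    exact psi_step T α hα y hy
  · intro y hy
    have he : T.symm (y - α) = T.symm y + -T.symm α := by rw [map_sub, sub_eq_add_neg]
    rw [he] at hy ⊢
    exact psi_step T.symm (-T.symm α) hα2 y hy
  · intro A' hmink' hhyp' h3
    refine LinearEquiv.toLinearMap_injective ?_
    refine Module.Basis.ext (Pi.basisFun ℝ (Fin (n+1))) ?_
    intro j
    simp only [Pi.basisFun_apply, LinearEquiv.coe_coe]
    have hdom0 : ‖(0 : EuclideanSpace ℝ (Fin n))‖ + ‖T 0 + α‖ < 2 := by simpa using hα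
    have hkey0 : (Pi.single 0 1 : Fin (n+1) → ℝ) = Psi1 0 (T 0 + α) := by
      rw [psi1_zero, liftVec_one_zero]
    have h0 : A' (Pi.single 0 1 : Fin (n+1) → ℝ)
        = Aequiv T α hα (Pi.single 0 1 : Fin (n+1) → ℝ) := by
      rw [hkey0, ← h3 0 hdom0, psi_step T α hα 0 hdom0]
      rfl
    refine Fin.cases ?_ ?_ j
    · exact h0
    · intro i
      set ε : ℝ := (2 - ‖α‖) / 4 with hε
      have hεpos : 0 < ε := by rw [hε]; linarith
      set a : EuclideanSpace ℝ (Fin n) := EuclideanSpace.single i ε with ha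
      have hna : ‖a‖ = ε := by
        rw [ha, EuclideanSpace.norm_single, Real.norm_eq_abs, abs_of_pos hεpos]
      have hdom : ‖a‖ + ‖T a + α‖ < 2 := by
        have h1 : ‖T a + α‖ ≤ ‖a‖ + ‖α‖ := by
          calc ‖T a + α‖ ≤ ‖T a‖ + ‖α‖ := norm_add_le _ _
          _ = ‖a‖ + ‖α‖ := by rw [T.norm_map]
        rw [hna] at h1 ⊢
        rw [hε] at *
        linarith
      have hf : 0 < fQ a (T a + α) := fQ_pos hdom
      have hr : 0 < Real.sqrt (fQ a (T a + α)) := Real.sqrt_pos.mpr hf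
      set d : ℝ := 4 / Real.sqrt (fQ a (T a + α)) with hd
      have hdpos : 0 < d := by positivity
      have hde : d * ε ≠ 0 := by positivity
      set t : ℝ := Real.sqrt (‖(4 / Real.sqrt (fQ a (T a + α))) • a‖ ^ 2 + 1) with ht
      have hw : Psi1 a (T a + α)
          = t • (Pi.single 0 1 : Fin (n+1) → ℝ) + (d * ε) • (Pi.single i.succ 1 : Fin (n+1) → ℝ) := by
        have h' : Psi1 a (T a + α) = liftVec t (d • EuclideanSpace.single i ε) := by
          rw [Psi1, ← ht, ← hd, ha]
        rw [h', liftVec_single]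
      have hsingle : (Pi.single i.succ 1 : Fin (n+1) → ℝ)
          = (d * ε)⁻¹ • (Psi1 a (T a + α) - t • (Pi.single 0 1 : Fin (n+1) → ℝ)) := by
        rw [hw, add_sub_cancel_left, smul_smul, inv_mul_cancel₀ hde, one_smul]
      rw [hsingle, map_smul, map_smul, map_sub, map_sub, map_smul, map_smul, h0,
        ← h3 a hdom, psi_step T α hα a hdom]
      rfl
end
end

section
/- Let A : ℝ^{n+1} → ℝ^{n+1} be a linear map preserving the Minkowski product (⟨Ax, Ay⟩ = ⟨x, y⟩ for all x, y) with ⟨Ae + e, e⟩ ≠ 0. Define the linear map T by T(x) = A x − (⟨Ax + x, e⟩/⟨Ae + e, e⟩)·(Ae + e). Then T preserves the Minkowski product and T(e) = −e. (Consequently T maps the Minkowski-orthogonal complement {x : ⟨x, e⟩ = 0} = {0} × ℝⁿ to itself and restricts there to a Euclidean linear isometry.) -/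
open scoped BigOperators

noncomputable section

lemma mink_comm {n : ℕ} (x y : Fin (n + 1) → ℝ) : mink x y = mink y x := by
  simp [mink, mul_comm]

lemma mink_add_left {n : ℕ} (x y z : Fin (n + 1) → ℝ) :
    mink (x + y) z = mink x z + mink y z := by
  simp [mink, add_mul, Finset.sum_add_distrib]; ring

lemma mink_sub_left {n : ℕ} (x y z : Fin (n + 1) → ℝ) :
    mink (x - y) z = mink x z - mink y z := by
  simp [mink, sub_mul, Finset.sum_sub_distrib]; ring

lemma mink_smul_left {n : ℕ} (c : ℝ) (x z : Fin (n + 1) → ℝ) :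
    mink (c • x) z = c * mink x z := by
  simp [mink, Finset.mul_sum, mul_add]; ring_nf

lemma mink_sub_right {n : ℕ} (x y z : Fin (n + 1) → ℝ) :
    mink z (x - y) = mink z x - mink z y := by
  rw [mink_comm, mink_sub_left, mink_comm x z, mink_comm y z]

lemma mink_add_right {n : ℕ} (x y z : Fin (n + 1) → ℝ) :
    mink z (x + y) = mink z x + mink z y := by
  rw [mink_comm, mink_add_left, mink_comm x z, mink_comm y z]

lemma mink_smul_right {n : ℕ} (c : ℝ) (x z : Fin (n + 1) → ℝ) :
    mink z (c • x) = c * mink z x := by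
  rw [mink_comm, mink_smul_left, mink_comm]

/-- for a Minkowski-product-preserving linear map `A` with
`⟨Ae + e, e⟩ ≠ 0`, the map `T x = Ax − (⟨Ax+x,e⟩/⟨Ae+e,e⟩)(Ae+e)` preserves the
Minkowski product and sends `e` to `−e`. -/
theorem statement_18 {n : ℕ} (hn : 1 ≤ n)
    (A : (Fin (n + 1) → ℝ) →ₗ[ℝ] (Fin (n + 1) → ℝ))
    (hA : ∀ x y, mink (A x) (A y) = mink x y)
    (he : mink (A (eVec n) + eVec n) (eVec n) ≠ 0)
    (T : (Fin (n + 1) → ℝ) → (Fin (n + 1) → ℝ))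
    (hT : ∀ x, T x = A x -
      (mink (A x + x) (eVec n) / mink (A (eVec n) + eVec n) (eVec n)) •
        (A (eVec n) + eVec n)) :
    (∀ x y, mink (T x) (T y) = mink x y) ∧ T (eVec n) = -(eVec n) := by
  set e := eVec n with he'
  set u := A e + e with hu
  set c := mink u e with hc
  have huu : mink u u = 2 * c := by
    rw [hu, mink_add_left, mink_add_right, mink_add_right, hA]
    rw [hc, hu, mink_add_left]
    rw [mink_comm e (A e)]
    ring
  constructor
  · intro x y
    have hAxu : mink (A x) u = mink (A x + x) e := by
      rw [hu, mink_add_right, hA, mink_add_left]; ring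
    have hAyu : mink u (A y) = mink (A y + y) e := by
      rw [mink_comm, hu, mink_add_right, hA, mink_add_left]; ring
    rw [hT x, hT y]
    rw [mink_sub_left, mink_sub_right, mink_sub_right,
      mink_smul_left, mink_smul_right, mink_smul_left, mink_smul_right]
    rw [hAxu, hAyu, huu, hA]
    field_simp
    ring
  · rw [hT e, ← hu, ← hc, div_self (hc ▸ he), one_smul, hu]
    abel
end
end
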